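/- For H a graph (viewed as a hypergraph that is the saturated closure of an atomic hypergraph whose non-singleton members other than ⋃H are all two-element sets) that is not loose, and {X₁,…,Xₙ} ⊆ H with n ≥ 2: if Xᵢ ∪ Xⱼ ∉ H for all distinct i, j, then X₁ ∪ … ∪ Xₙ ∉ H. -/

import Mathlib

namespace HG

variable {α : Type*} [DecidableEq α]

/-- The carrier of a hypergraph: the union of its members. -/
def carrier (H : Finset (Finset α)) : Finset α := H.sup id

/-- A hypergraph (on its carrier) is a finite family of sets not containing `∅`. -/
def IsHypergraph (H : Finset (Finset α)) : Prop := ∅ ∉ H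

/-- The restriction `H_Y = {X ∈ H ∣ X ⊆ Y}`. -/
def restrict (H : Finset (Finset α)) (Y : Finset α) : Finset (Finset α) :=
  H.filter (· ⊆ Y)

/-- `x` and `y` are joined by a path of `H`: a nonempty sequence of distinct members
of `H`, consecutive members intersecting, the first containing `x`, the last `y`. -/
def Joined (H : Finset (Finset α)) (x y : α) : Prop :=
  ∃ (X : Finset α) (l : List (Finset α)),
    (X :: l).Nodup ∧ (∀ Z ∈ X :: l, Z ∈ H) ∧
    (X :: l).Chain' (fun A B => (A ∩ B).Nonempty) ∧
    x ∈ X ∧ y ∈ (X :: l).getLast (List.cons_ne_nil X l)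

/-- Path-connectedness of a hypergraph: any two carrier elements are joined. -/
def Conn (H : Finset (Finset α)) : Prop :=
  ∀ x ∈ carrier H, ∀ y ∈ carrier H, Joined H x y

/-- `P` is a hypergraph partition of `H`: a partition of `H` whose family of
carriers is a partition of the carrier of `H`. -/
def IsHGPartition (H : Finset (Finset α)) (P : Finset (Finset (Finset α))) : Prop :=
  (∀ Q ∈ P, Q ≠ ∅) ∧
  (∀ Q ∈ P, ∀ Q' ∈ P, Q ≠ Q' → Disjoint Q Q') ∧
  P.sup id = H ∧
  (∀ Q ∈ P, ∀ Q' ∈ P, Q ≠ Q' → Disjoint (carrier Q) (carrier Q'))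

/-- A hypergraph is atomic when it contains all singletons of carrier elements. -/
def Atomic (H : Finset (Finset α)) : Prop := ∀ x ∈ carrier H, {x} ∈ H

/-- A hypergraph is saturated when intersecting members have their union in it. -/
def Saturated (H : Finset (Finset α)) : Prop :=
  ∀ X ∈ H, ∀ Y ∈ H, (X ∩ Y).Nonempty → X ∪ Y ∈ H

/-- `Y` is dispensable in `H` when `(H_Y) \ {Y}` is a connected hypergraph on `Y`. -/
def Dispensable (H : Finset (Finset α)) (Y : Finset α) : Prop :=
  IsHypergraph ((restrict H Y).erase Y) ∧
  carrier ((restrict H Y).erase Y) = Y ∧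
  Conn ((restrict H Y).erase Y)

/-- `J` enhances `H` when `J = H ∪ {Y}` for some `Y ∉ H` dispensable in `H`. -/
def Enhances (J H : Finset (Finset α)) : Prop :=
  ∃ Y, Dispensable H Y ∧ Y ∉ H ∧ J = insert Y H

/-- Cognation: the equivalence closure of the enhancement relation. -/
def Cognate (H J : Finset (Finset α)) : Prop :=
  Relation.EqvGen Enhances H J

/-- The finest hypergraph partition: one all of whose parts are connected. -/
def FinestHGPartition (H : Finset (Finset α)) (P : Finset (Finset (Finset α))) : Prop :=
  IsHGPartition H P ∧ ∀ Q ∈ P, Conn Q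

/-- Constructions of a hypergraph, defined recursively. -/
inductive IsConstruction : Finset (Finset α) → Finset (Finset α) → Prop
  | empty : IsConstruction ∅ ∅
  | conn {H K : Finset (Finset α)} {x : α} :
      (carrier H).Nonempty → Conn H → x ∈ carrier H →
      IsConstruction (restrict H ((carrier H).erase x)) K →
      IsConstruction H (insert (carrier H) K)
  | parts {H : Finset (Finset α)} {P : Finset (Finset (Finset α))}
      {K : Finset (Finset α) → Finset (Finset α)} :
      2 ≤ (carrier H).card → ¬ Conn H → 2 ≤ P.card → FinestHGPartition H P →
      (∀ Q ∈ P, IsConstruction Q (K Q)) →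
      IsConstruction H (P.sup K)

/-- An `M`-antichain: at least two members of `M`, pairwise incomparable. -/
def IsAntichainIn (M S : Finset (Finset α)) : Prop :=
  S ⊆ M ∧ 2 ≤ S.card ∧ ∀ X ∈ S, ∀ Y ∈ S, X ≠ Y → ¬ X ⊆ Y ∧ ¬ Y ⊆ X

/-- `S` misses `H` when the union of `S` is not a member of `H`. -/
def Misses (H S : Finset (Finset α)) : Prop := S.sup id ∉ H

/-- `x` is `X`-superficial relative to `M`. -/
def Superficial (M : Finset (Finset α)) (X : Finset α) (x : α) : Prop :=
  x ∈ X ∧ ∀ Y ∈ M, Y ⊂ X → x ∉ Y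

/-- ASC-hypergraph: atomic, saturated and connected hypergraph. -/
def ASC (H : Finset (Finset α)) : Prop :=
  IsHypergraph H ∧ Atomic H ∧ Saturated H ∧ Conn H

end HG

open HG

/-- A graph: the saturated closure of a nonempty atomic hypergraph containing its
carrier and whose other non-singleton members are two-element sets. -/
def IsGraph {α : Type*} [DecidableEq α] (G : Finset (Finset α)) : Prop :=
  ∃ H' : Finset (Finset α), IsHypergraph H' ∧ Atomic H' ∧ H' ≠ ∅ ∧
    carrier H' ∈ H' ∧ (∀ X ∈ H', X.card = 1 ∨ X.card = 2 ∨ X = carrier H') ∧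
    Cognate H' G ∧ Saturated G

/-- A hypergraph is loose when `H \ {⋃H}` is not a connected hypergraph on `⋃H`,
i.e. `⋃H` is not dispensable in `H`. -/
def Loose {α : Type*} [DecidableEq α] (H : Finset (Finset α)) : Prop :=
  ¬ Dispensable H (carrier H)

namespace HGAux

variable {α : Type*} [DecidableEq α]

/-- A graph step within `S` using two-element edges from `E`. -/
def Step (E : Finset (Finset α)) (S : Finset α) (x y : α) : Prop :=
  x ∈ S ∧ y ∈ S ∧ x ≠ y ∧ ({x, y} : Finset α) ∈ E

/-- `S` is graph-connected via edges of `E`. -/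
def GConn (E : Finset (Finset α)) (S : Finset α) : Prop :=
  ∀ a ∈ S, ∀ b ∈ S, Relation.ReflTransGen (Step E S) a b

lemma step_mono {E : Finset (Finset α)} {S T : Finset α} (hST : S ⊆ T) {x y : α}
    (h : Step E S x y) : Step E T x y :=
  ⟨hST h.1, hST h.2.1, h.2.2⟩

lemma mem_carrier {H : Finset (Finset α)} {X : Finset α} (hX : X ∈ H) : X ⊆ carrier H :=
  Finset.le_sup (f := id) hX

lemma chain_rtg {E K : Finset (Finset α)} (hK : ∀ Z ∈ K, GConn E Z) :
    ∀ (l : List (Finset α)) (X : Finset α), (∀ Z ∈ X :: l, Z ∈ K) →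
    (X :: l).Chain' (fun A B => (A ∩ B).Nonempty) →
    ∀ x ∈ X, ∀ y ∈ (X :: l).getLast (List.cons_ne_nil X l),
      Relation.ReflTransGen (Step E (carrier K)) x y := by
  intro l
  induction l with
  | nil =>
    intro X hmem _ x hx y hy
    simp only [List.getLast_singleton] at hy
    exact Relation.ReflTransGen.lift id
      (fun a b hab => step_mono (mem_carrier (hmem X (by simp))) hab) _ _ (hK X (hmem X (by simp)) x hx y hy)
  | cons Z l ih =>
    intro X hmem hchain x hx y hy
    obtain ⟨⟨w, hw⟩, hchain'⟩ := List.isChain_cons_cons.mp hchain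
    have hwX : w ∈ X := (Finset.mem_inter.mp hw).1
    have hwZ : w ∈ Z := (Finset.mem_inter.mp hw).2
    have h1 : Relation.ReflTransGen (Step E (carrier K)) x w :=
      Relation.ReflTransGen.lift id
        (fun a b hab => step_mono (mem_carrier (hmem X (by simp))) hab) _ _ (hK X (hmem X (by simp)) x hx w hwX)
    have hy' : y ∈ (Z :: l).getLast (List.cons_ne_nil Z l) := by
      rwa [List.getLast_cons (List.cons_ne_nil Z l)] at hy
    exact h1.trans (ih Z (fun W hW => hmem W (List.mem_cons_of_mem X hW)) hchain' w hwZ y hy')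

lemma gconn_carrier {E K : Finset (Finset α)} (hK : ∀ Z ∈ K, GConn E Z)
    (hc : Conn K) : GConn E (carrier K) := by
  intro a ha b hb
  obtain ⟨X, l, _, hmem, hchain, hax, hbl⟩ := hc a ha b hb
  exact chain_rtg hK l X hmem hchain a hax b hbl

lemma erase_restrict_subset {H : Finset (Finset α)} {Y : Finset α} :
    (restrict H Y).erase Y ⊆ H :=
  fun Z hZ => Finset.mem_filter.mp (Finset.mem_of_mem_erase hZ) |>.1

lemma mem_erase_restrict {H : Finset (Finset α)} {Y Z : Finset α}
    (hZ : Z ∈ (restrict H Y).erase Y) : Z ∈ H ∧ Z ⊆ Y ∧ Z ≠ Y := by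
  have h1 := Finset.mem_of_mem_erase hZ
  have h2 := Finset.mem_filter.mp h1
  exact ⟨h2.1, h2.2, Finset.ne_of_mem_erase hZ⟩

lemma dispensable_not_small {H : Finset (Finset α)} {Y : Finset α}
    (hd : Dispensable H Y) (hne : Y.Nonempty) : ¬ Y.card ≤ 2 := by
  obtain ⟨hhg, hcar, hconn⟩ := hd
  intro hle
  set K := (restrict H Y).erase Y with hKdef
  interval_cases hY : Y.card
  · exact absurd (Finset.card_eq_zero.mp hY) hne.ne_empty
  · obtain ⟨x, hx⟩ := Finset.card_eq_one.mp hY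
    have hxc : x ∈ carrier K := by rw [hcar, hx]; exact Finset.mem_singleton_self x
    obtain ⟨Z, hZK, hxZ⟩ := Finset.mem_sup.mp hxc
    obtain ⟨_, hZY, hZne⟩ := mem_erase_restrict hZK
    rcases Finset.subset_singleton_iff.mp (hx ▸ hZY) with rfl | rfl
    · exact absurd hxZ (Finset.notMem_empty x)
    · exact hZne hx.symm
  · obtain ⟨x, y, hxy, hY2⟩ := Finset.card_eq_two.mp hY
    have hsingle : ∀ Z ∈ K, Z = {x} ∨ Z = {y} := by
      intro Z hZK
      obtain ⟨_, hZY, hZne⟩ := mem_erase_restrict hZK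
      have hZnee : Z ≠ ∅ := fun h => hhg (h ▸ hZK)
      have hcZ : Z.card ≤ 1 := by
        have hss : Z ⊂ Y := hZY.ssubset_of_ne hZne
        have := Finset.card_lt_card hss
        omega
      obtain ⟨z, hz⟩ := Finset.card_eq_one.mp
        (le_antisymm hcZ (Finset.card_pos.mpr (Finset.nonempty_of_ne_empty hZnee)))
      have hzY : z ∈ Y := hZY (hz ▸ Finset.mem_singleton_self z)
      rw [hY2] at hzY
      rcases Finset.mem_insert.mp hzY with rfl | hzy
      · exact Or.inl hz
      · exact Or.inr (by rw [hz, Finset.mem_singleton.mp hzy])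
    have hxc : x ∈ carrier K := by rw [hcar, hY2]; exact Finset.mem_insert_self x _
    have hyc : y ∈ carrier K := by
      rw [hcar, hY2]; exact Finset.mem_insert_of_mem (Finset.mem_singleton_self y)
    obtain ⟨X, l, hnodup, hmem, hchain, hxX, hyl⟩ := hconn x hxc y hyc
    have hXx : X = {x} := by
      rcases hsingle X (hmem X (by simp)) with rfl | rfl
      · rfl
      · exact absurd (Finset.mem_singleton.mp hxX) hxy
    cases l with
    | nil =>
      simp only [List.getLast_singleton] at hyl
      exact hxy (Finset.mem_singleton.mp (hXx ▸ hyl)).symm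
    | cons Z l' =>
      obtain ⟨⟨w, hw⟩, _⟩ := List.isChain_cons_cons.mp hchain
      have hXZ : X ≠ Z := fun h => (List.nodup_cons.mp hnodup).1 (h ▸ List.mem_cons_self)
      rcases hsingle Z (hmem Z (by simp)) with rfl | rfl
      · exact hXZ hXx
      · rw [hXx] at hw
        have := Finset.mem_inter.mp hw
        exact hxy ((Finset.mem_singleton.mp this.1).symm.trans (Finset.mem_singleton.mp this.2))

lemma carrier_mono {K H : Finset (Finset α)} (h : K ⊆ H) : carrier K ⊆ carrier H := by
  intro x hx
  obtain ⟨Z, hZ, hxZ⟩ := Finset.mem_sup.mp hx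
  exact Finset.mem_sup.mpr ⟨Z, h hZ, hxZ⟩

lemma carrier_insert_of_dispensable {H : Finset (Finset α)} {Y : Finset α}
    (hd : Dispensable H Y) : carrier (insert Y H) = carrier H := by
  have hYsub : Y ⊆ carrier H := by
    rw [← hd.2.1]
    exact carrier_mono erase_restrict_subset
  rw [carrier, Finset.sup_insert]
  exact sup_eq_right.mpr (Finset.le_iff_subset.mpr hYsub)

/-- The invariant carried along cognation. -/
structure Inv (H' J : Finset (Finset α)) : Prop where
  small : ∀ X : Finset α, X.Nonempty → X.card ≤ 2 → (X ∈ J ↔ X ∈ H')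
  carr : carrier J = carrier H'
  conn : ∀ X ∈ J, X ≠ carrier H' → GConn H' X

lemma inv_iff_of_enhances {H' A B : Finset (Finset α)} (hAB : Enhances A B) :
    Inv H' A ↔ Inv H' B := by
  obtain ⟨Y, hd, hYB, rfl⟩ := hAB
  have hYnotsmall : ∀ X : Finset α, X.Nonempty → X.card ≤ 2 → X ≠ Y := by
    rintro X hXne hX2 rfl
    exact dispensable_not_small hd hXne hX2
  have hcarr : carrier (insert Y B) = carrier B := carrier_insert_of_dispensable hd
  constructor
  · rintro ⟨hsmall, hcar, hconn⟩
    refine ⟨fun X hXne hX2 => ?_, hcarr ▸ hcar, fun X hX hXc => hconn X (Finset.mem_insert_of_mem hX) hXc⟩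
    rw [← hsmall X hXne hX2]
    constructor
    · exact Finset.mem_insert_of_mem
    · intro hXi
      rcases Finset.mem_insert.mp hXi with rfl | hXB
      · exact absurd rfl (hYnotsmall X hXne hX2)
      · exact hXB
  · rintro ⟨hsmall, hcar, hconn⟩
    refine ⟨fun X hXne hX2 => ?_, hcarr.trans hcar, ?_⟩
    · rw [← hsmall X hXne hX2]
      constructor
      · intro hXi
        rcases Finset.mem_insert.mp hXi with rfl | hXB
        · exact absurd rfl (hYnotsmall X hXne hX2)
        · exact hXB
      · exact Finset.mem_insert_of_mem
    · intro X hX hXc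
      rcases Finset.mem_insert.mp hX with rfl | hXB
      · -- X = Y, Y ≠ carrier H'
        obtain ⟨hhg, hKcar, hKconn⟩ := hd
        have hmemK : ∀ Z ∈ (restrict B X).erase X, GConn H' Z := by
          intro Z hZ
          obtain ⟨hZB, hZX, _⟩ := mem_erase_restrict hZ
          refine hconn Z hZB ?_
          rintro rfl
          have hXcar : X ⊆ carrier B := by
            rw [← hKcar]; exact carrier_mono erase_restrict_subset
          rw [hcar] at hXcar
          exact hXc (subset_antisymm hXcar hZX)
        have := gconn_carrier hmemK hKconn
        rwa [hKcar] at this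
      · exact hconn X hXB hXc

lemma cross {r : α → α → Prop} {X : Finset α} {a b : α}
    (hab : Relation.ReflTransGen r a b) (ha : a ∈ X) :
    b ∉ X → ∃ u v, r u v ∧ u ∈ X ∧ v ∉ X := by
  induction hab with
  | refl => intro hb; exact absurd ha hb
  | @tail m c _ h2 ih =>
    intro hc
    by_cases hm : m ∈ X
    · exact ⟨m, c, h2, hm, hc⟩
    · exact ih hm

end HGAux

open HGAux

theorem graph_union_not_mem
    {α : Type*} [DecidableEq α]
    (G : Finset (Finset α)) (hG : IsGraph G) (hl : ¬ Loose G)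
    (F : Finset (Finset α)) (hF : F ⊆ G) (hcard : 2 ≤ F.card)
    (h : ∀ X ∈ F, ∀ Y ∈ F, X ≠ Y → X ∪ Y ∉ G) :
    F.sup id ∉ G := by
  intro hU
  obtain ⟨H', hhg', hatom', hne', hcar', hsmall', hcog, hsat⟩ := hG
  -- the invariant holds for G
  have hinvH' : Inv H' H' := by
    refine ⟨fun X _ _ => Iff.rfl, rfl, ?_⟩
    intro X hX hXc
    rcases hsmall' X hX with h1 | h2 | h3
    · obtain ⟨x, rfl⟩ := Finset.card_eq_one.mp h1
      intro a ha b hb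
      rw [Finset.mem_singleton.mp ha, Finset.mem_singleton.mp hb]
    · intro a ha b hb
      by_cases hab : a = b
      · rw [hab]
      · refine Relation.ReflTransGen.single ⟨ha, hb, hab, ?_⟩
        have hsub : ({a, b} : Finset α) ⊆ X := by
          intro z hz
          rcases Finset.mem_insert.mp hz with rfl | hz
          · exact ha
          · exact Finset.mem_singleton.mp hz ▸ hb
        have hcard2 : ({a, b} : Finset α).card = 2 := Finset.card_pair hab
        have : ({a, b} : Finset α) = X :=
          Finset.eq_of_subset_of_card_le hsub (by omega)
        exact this ▸ hX
    · exact absurd h3 hXc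
  have hinvG : Inv H' G := by
    have key : ∀ A B : Finset (Finset α), Relation.EqvGen Enhances A B →
        (Inv H' A ↔ Inv H' B) := by
      intro A B hAB
      induction hAB with
      | rel A B hAB => exact inv_iff_of_enhances hAB
      | refl A => exact Iff.rfl
      | symm A B _ ih => exact ih.symm
      | trans A B C _ _ ih1 ih2 => exact ih1.trans ih2
    exact (key H' G hcog).mp hinvH'
  -- every member of G is graph-connected
  have hallconn : ∀ X ∈ G, GConn H' X := by
    intro X hX
    by_cases hXc : X = carrier H'
    · -- use that G is not loose
      have hd : Dispensable G (carrier G) := not_not.mp hl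
      obtain ⟨_, hKcar, hKconn⟩ := hd
      have hmemK : ∀ Z ∈ (restrict G (carrier G)).erase (carrier G), GConn H' Z := by
        intro Z hZ
        obtain ⟨hZG, _, hZne⟩ := mem_erase_restrict hZ
        exact hinvG.conn Z hZG (fun h => hZne (h.trans hinvG.carr.symm))
      have := gconn_carrier hmemK hKconn
      rw [hKcar, hinvG.carr] at this
      exact hXc ▸ this
    · exact hinvG.conn X hX hXc
  -- all members of F are nonempty
  have hFne : ∀ X ∈ F, X.Nonempty := by
    intro X hX
    rw [Finset.nonempty_iff_ne_empty]
    rintro rfl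
    obtain ⟨A, hA, B, hB, hAB⟩ := Finset.one_lt_card.mp hcard
    by_cases hAe : A = (∅ : Finset α)
    · exact h B hB ∅ hX (fun hh => hAB (hAe.trans hh.symm)) (by simpa using hF hB)
    · exact h A hA ∅ hX hAe (by simpa using hF hA)
  -- pick two distinct members
  obtain ⟨X, hXF, Y, hYF, hXY⟩ := Finset.one_lt_card.mp hcard
  obtain ⟨a, ha⟩ := hFne X hXF
  obtain ⟨b, hb⟩ := hFne Y hYF
  -- members of F are pairwise disjoint
  have hdisj : ∀ P ∈ F, ∀ Q ∈ F, P ≠ Q → ∀ z, z ∈ P → z ∉ Q := by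
    intro P hP Q hQ hPQ z hzP hzQ
    exact h P hP Q hQ hPQ (hsat P (hF hP) Q (hF hQ) ⟨z, Finset.mem_inter.mpr ⟨hzP, hzQ⟩⟩)
  have haU : a ∈ F.sup id := Finset.le_sup (f := id) hXF ha
  have hbU : b ∈ F.sup id := Finset.le_sup (f := id) hYF hb
  have hbX : b ∉ X := fun hbX => hdisj X hXF Y hYF hXY b hbX hb
  -- find a crossing edge
  obtain ⟨u, v, hstep, huX, hvX⟩ := cross (hallconn _ hU a haU b hbU) ha hbX
  obtain ⟨huU, hvU, huv, hedge⟩ := hstep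
  obtain ⟨Z, hZF, hvZ⟩ := Finset.mem_sup.mp hvU
  have hvZ : v ∈ Z := hvZ
  have hZX : Z ≠ X := fun hh => hvX (hh ▸ hvZ)
  -- the edge is in G
  have hedgeG : ({u, v} : Finset α) ∈ G :=
    (hinvG.small {u, v} ⟨u, Finset.mem_insert_self u _⟩ (by
      rw [Finset.card_pair huv])).mpr hedge
  -- saturate twice
  have h1 : X ∪ {u, v} ∈ G :=
    hsat X (hF hXF) _ hedgeG ⟨u, Finset.mem_inter.mpr ⟨huX, Finset.mem_insert_self u _⟩⟩
  have h2 : (X ∪ {u, v}) ∪ Z ∈ G :=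
    hsat _ h1 Z (hF hZF) ⟨v, Finset.mem_inter.mpr
      ⟨Finset.mem_union_right _ (Finset.mem_insert_of_mem (Finset.mem_singleton_self v)), hvZ⟩⟩
  have heq : (X ∪ {u, v}) ∪ Z = X ∪ Z := by
    apply subset_antisymm
    · intro z hz
      rcases Finset.mem_union.mp hz with hz | hz
      · rcases Finset.mem_union.mp hz with hz | hz
        · exact Finset.mem_union_left _ hz
        · rcases Finset.mem_insert.mp hz with rfl | hz
          · exact Finset.mem_union_left _ huX
          · exact Finset.mem_union_right _ (Finset.mem_singleton.mp hz ▸ hvZ)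
      · exact Finset.mem_union_right _ hz
    · intro z hz
      rcases Finset.mem_union.mp hz with hz | hz
      · exact Finset.mem_union_left _ (Finset.mem_union_left _ hz)
      · exact Finset.mem_union_right _ hz
  rw [heq] at h2
  exact h X hXF Z hZF (Ne.symm hZX) h2
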